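/- Suppose the scalar differential inequality u̇(t) ≤ −ρ(u(t)) holds for t ≥ 0, where u : ℝ≥0 → ℝ≥0 is absolutely continuous and ρ : ℝ≥0 → ℝ≥0 is continuous, positive definite, and globally Lipschitz. Then there exists a class-KL function σ (depending only on ρ) such that u(t) ≤ σ(u(0), t) for all t ≥ 0. -/

import Mathlib

open MeasureTheory intervalIntegral Set Filter Real

def ClassK (a : ℝ → ℝ) : Prop :=
  ContinuousOn a (Set.Ici 0) ∧ StrictMonoOn a (Set.Ici 0) ∧ a 0 = 0

def ClassKInf (a : ℝ → ℝ) : Prop :=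
  ClassK a ∧ Filter.Tendsto a Filter.atTop Filter.atTop

def ClassKL (σ : ℝ → ℝ → ℝ) : Prop :=
  ContinuousOn (fun p : ℝ × ℝ => σ p.1 p.2) (Set.Ici 0 ×ˢ Set.Ici 0) ∧
  (∀ t ≥ (0:ℝ), StrictMonoOn (fun s => σ s t) (Set.Ici 0) ∧ σ 0 t = 0) ∧
  (∀ s ≥ (0:ℝ), AntitoneOn (fun t => σ s t) (Set.Ici 0) ∧
    Filter.Tendsto (fun t => σ s t) Filter.atTop (nhds 0))

namespace S14

variable {ρ : ℝ → ℝ}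

noncomputable def rh (ρ : ℝ → ℝ) (r : ℝ) : ℝ := min (ρ r) (min r r⁻¹)
noncomputable def g (ρ : ℝ → ℝ) (r : ℝ) : ℝ := (rh ρ r)⁻¹
noncomputable def G (ρ : ℝ → ℝ) (s : ℝ) : ℝ := ∫ q in (1:ℝ)..s, g ρ q

section basic

variable (hρc : ContinuousOn ρ (Set.Ici 0)) (hρpos : ∀ s > (0:ℝ), 0 < ρ s)

theorem rh_pos (hρpos : ∀ s > (0:ℝ), 0 < ρ s) {r : ℝ} (hr : 0 < r) : 0 < rh ρ r :=
  lt_min (hρpos r hr) (lt_min hr (inv_pos.2 hr))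

theorem rh_le_rho {r : ℝ} : rh ρ r ≤ ρ r := min_le_left _ _

theorem rh_le_self {r : ℝ} : rh ρ r ≤ r := (min_le_right _ _).trans (min_le_left _ _)

theorem rh_le_inv {r : ℝ} : rh ρ r ≤ r⁻¹ := (min_le_right _ _).trans (min_le_right _ _)

theorem rh_contOn (hρc : ContinuousOn ρ (Set.Ici 0)) : ContinuousOn (rh ρ) (Set.Ioi 0) := by
  intro x hx
  exact ((hρc x (Set.mem_Ici.2 (le_of_lt (Set.mem_Ioi.1 hx)))).mono (Ioi_subset_Ici le_rfl)).inf'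
    ((continuousWithinAt_id).inf' ((continuousOn_inv₀.mono (fun y hy => ne_of_gt hy)) x hx))

theorem g_pos (hρpos : ∀ s > (0:ℝ), 0 < ρ s) {r : ℝ} (hr : 0 < r) : 0 < g ρ r :=
  inv_pos.2 (rh_pos hρpos hr)

theorem g_contOn (hρc : ContinuousOn ρ (Set.Ici 0)) (hρpos : ∀ s > (0:ℝ), 0 < ρ s) :
    ContinuousOn (g ρ) (Set.Ioi 0) :=
  (rh_contOn hρc).inv₀ (fun x hx => ne_of_gt (rh_pos hρpos hx))

theorem g_intble (hρc : ContinuousOn ρ (Set.Ici 0)) (hρpos : ∀ s > (0:ℝ), 0 < ρ s)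
    {a b : ℝ} (ha : 0 < a) (hb : 0 < b) : IntervalIntegrable (g ρ) volume a b := by
  apply ContinuousOn.intervalIntegrable
  apply (g_contOn hρc hρpos).mono
  intro x hx
  exact lt_of_lt_of_le (lt_min ha hb) hx.1

end basic

section Gfacts

variable (hρc : ContinuousOn ρ (Set.Ici 0)) (hρpos : ∀ s > (0:ℝ), 0 < ρ s)

theorem G_sub (hρc : ContinuousOn ρ (Set.Ici 0)) (hρpos : ∀ s > (0:ℝ), 0 < ρ s)
    {a b : ℝ} (ha : 0 < a) (hb : 0 < b) :
    G ρ b - G ρ a = ∫ q in a..b, g ρ q := by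
  have h1 : G ρ a + ∫ q in a..b, g ρ q = G ρ b :=
    integral_add_adjacent_intervals (g_intble hρc hρpos one_pos ha) (g_intble hρc hρpos ha hb)
  linarith

theorem G_strictMonoOn (hρc : ContinuousOn ρ (Set.Ici 0)) (hρpos : ∀ s > (0:ℝ), 0 < ρ s) :
    StrictMonoOn (G ρ) (Set.Ioi 0) := by
  intro a ha b hb hab
  have h : 0 < ∫ q in a..b, g ρ q := by
    apply intervalIntegral_pos_of_pos_on (g_intble hρc hρpos ha hb)
      (fun x hx => g_pos hρpos (lt_trans ha hx.1)) hab
  have := G_sub hρc hρpos ha hb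
  linarith

theorem G_log_le (hρc : ContinuousOn ρ (Set.Ici 0)) (hρpos : ∀ s > (0:ℝ), 0 < ρ s)
    {a b : ℝ} (ha : 0 < a) (hab : a ≤ b) :
    Real.log b - Real.log a ≤ G ρ b - G ρ a := by
  have hb : 0 < b := lt_of_lt_of_le ha hab
  rw [G_sub hρc hρpos ha hb, ← Real.log_div (ne_of_gt hb) (ne_of_gt ha),
    ← integral_inv_of_pos ha hb]
  apply integral_mono_on hab (by
    apply ContinuousOn.intervalIntegrable
    apply continuousOn_inv₀.mono
    intro x hx
    rw [uIcc_of_le hab] at hx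
    exact ne_of_gt (lt_of_lt_of_le ha hx.1)) (g_intble hρc hρpos ha hb)
  intro x hx
  have hx0 : 0 < x := lt_of_lt_of_le ha hx.1
  exact one_div_le_one_div_of_le (rh_pos hρpos hx0) rh_le_self |>.trans_eq (by rw [g]; simp [one_div]) |>.trans_eq' (by simp [one_div])

theorem G_hasDeriv (hρc : ContinuousOn ρ (Set.Ici 0)) (hρpos : ∀ s > (0:ℝ), 0 < ρ s)
    {s : ℝ} (hs : 0 < s) : HasDerivAt (G ρ) (g ρ s) s := by
  have hopen : Set.Ioi (0:ℝ) ∈ nhds s := Ioi_mem_nhds hs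
  have hca : ContinuousAt (g ρ) s :=
    (g_contOn hρc hρpos).continuousAt hopen
  exact integral_hasDerivAt_right (g_intble hρc hρpos one_pos hs)
    (⟨Set.Ioi 0, hopen, ((g_contOn hρc hρpos).aestronglyMeasurable measurableSet_Ioi)⟩) hca

theorem G_contAt (hρc : ContinuousOn ρ (Set.Ici 0)) (hρpos : ∀ s > (0:ℝ), 0 < ρ s)
    {s : ℝ} (hs : 0 < s) : ContinuousAt (G ρ) s :=
  (G_hasDeriv hρc hρpos hs).continuousAt

theorem G_one (ρ : ℝ → ℝ) : G ρ 1 = 0 := by simp [G]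

theorem G_le_log (hρc : ContinuousOn ρ (Set.Ici 0)) (hρpos : ∀ s > (0:ℝ), 0 < ρ s)
    {s : ℝ} (hs : 0 < s) (hs1 : s ≤ 1) : G ρ s ≤ Real.log s := by
  have := G_log_le hρc hρpos hs hs1
  simp [G_one] at this
  linarith

theorem log_le_G (hρc : ContinuousOn ρ (Set.Ici 0)) (hρpos : ∀ s > (0:ℝ), 0 < ρ s)
    {s : ℝ} (hs1 : 1 ≤ s) : Real.log s ≤ G ρ s := by
  have := G_log_le hρc hρpos one_pos hs1
  simp [G_one] at this
  linarith

theorem G_surj (hρc : ContinuousOn ρ (Set.Ici 0)) (hρpos : ∀ s > (0:ℝ), 0 < ρ s)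
    (y : ℝ) : ∃ s : ℝ, 0 < s ∧ G ρ s = y := by
  set a : ℝ := min 1 (Real.exp y) with hadef
  set b : ℝ := max 1 (Real.exp y) with hbdef
  have ha : 0 < a := lt_min one_pos (Real.exp_pos y)
  have hb1 : 1 ≤ b := le_max_left _ _
  have hab : a ≤ b := (min_le_left _ _).trans (le_max_left _ _)
  have hGa : G ρ a ≤ y := by
    calc G ρ a ≤ Real.log a := G_le_log hρc hρpos ha (min_le_left _ _)
    _ ≤ Real.log (Real.exp y) := Real.log_le_log ha (min_le_right _ _)
    _ = y := Real.log_exp y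
  have hGb : y ≤ G ρ b := by
    calc y = Real.log (Real.exp y) := (Real.log_exp y).symm
    _ ≤ Real.log b := Real.log_le_log (Real.exp_pos y) (le_max_right _ _)
    _ ≤ G ρ b := log_le_G hρc hρpos hb1
  have hcont : ContinuousOn (G ρ) (Set.Icc a b) := by
    intro x hx
    exact (G_contAt hρc hρpos (lt_of_lt_of_le ha hx.1)).continuousWithinAt
  have := intermediate_value_Icc hab hcont
  rcases this ⟨hGa, hGb⟩ with ⟨s, hsmem, hGs⟩
  exact ⟨s, lt_of_lt_of_le ha hsmem.1, hGs⟩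

end Gfacts

section Ffacts

variable (hρc : ContinuousOn ρ (Set.Ici 0)) (hρpos : ∀ s > (0:ℝ), 0 < ρ s)

noncomputable def F (hρc : ContinuousOn ρ (Set.Ici 0)) (hρpos : ∀ s > (0:ℝ), 0 < ρ s)
    (y : ℝ) : ℝ := (G_surj hρc hρpos y).choose

theorem F_pos (y : ℝ) : 0 < F hρc hρpos y := (G_surj hρc hρpos y).choose_spec.1

theorem G_F (y : ℝ) : G ρ (F hρc hρpos y) = y := (G_surj hρc hρpos y).choose_spec.2

theorem F_G {s : ℝ} (hs : 0 < s) : F hρc hρpos (G ρ s) = s := by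
  have h1 := G_F hρc hρpos (G ρ s)
  have := G_strictMonoOn hρc hρpos |>.injOn
  exact this (F_pos hρc hρpos (G ρ s)) hs h1

theorem F_strictMono : StrictMono (F hρc hρpos) := by
  intro y1 y2 h
  by_contra hle
  push_neg at hle
  have := (G_strictMonoOn hρc hρpos).monotoneOn (F_pos hρc hρpos y2) (F_pos hρc hρpos y1) hle
  rw [G_F, G_F] at this
  exact absurd this (not_le.2 h)

theorem F_mono : Monotone (F hρc hρpos) := (F_strictMono hρc hρpos).monotone

theorem F_lt_iff {y : ℝ} {s : ℝ} (hs : 0 < s) : F hρc hρpos y < s ↔ y < G ρ s := by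
  constructor
  · intro h
    have := (G_strictMonoOn hρc hρpos) (F_pos hρc hρpos y) hs h
    rwa [G_F] at this
  · intro h
    by_contra hle
    push_neg at hle
    have := (G_strictMonoOn hρc hρpos).monotoneOn hs (F_pos hρc hρpos y) hle
    rw [G_F] at this
    exact absurd this (not_le.2 h)

theorem F_le_iff {y : ℝ} {s : ℝ} (hs : 0 < s) : F hρc hρpos y ≤ s ↔ y ≤ G ρ s := by
  constructor
  · intro h
    have := (G_strictMonoOn hρc hρpos).monotoneOn (F_pos hρc hρpos y) hs h
    rwa [G_F] at this
  · intro h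
    rcases eq_or_lt_of_le h with h|h
    · rw [h, F_G hρc hρpos hs]
    · exact le_of_lt ((F_lt_iff hρc hρpos hs).2 h)

theorem F_continuous : Continuous (F hρc hρpos) := by
  rw [Metric.continuous_iff]
  intro y ε hε
  set r := F hρc hρpos y with hr
  have hrpos : 0 < r := F_pos hρc hρpos y
  set ε' := min (ε/2) (r/2) with hε'
  have hε'pos : 0 < ε' := lt_min (by linarith) (by linarith)
  have h1 : 0 < r - ε' := by
    have : ε' ≤ r/2 := min_le_right _ _
    linarith
  have h2 : G ρ (r - ε') < y := by
    have := (G_strictMonoOn hρc hρpos) h1 hrpos (by linarith)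
    rwa [hr, G_F] at this
  have h3 : y < G ρ (r + ε') := by
    have := (G_strictMonoOn hρc hρpos) (Set.mem_Ioi.2 hrpos)
      (Set.mem_Ioi.2 (show (0:ℝ) < r + ε' by linarith)) (show r < r + ε' by linarith)
    rwa [hr, G_F] at this
  refine ⟨min (y - G ρ (r - ε')) (G ρ (r + ε') - y), lt_min (by linarith) (by linarith), ?_⟩
  intro y' hy'
  rw [Real.dist_eq] at hy' ⊢
  have hd1 : |y' - y| < y - G ρ (r - ε') := lt_of_lt_of_le hy' (min_le_left _ _)
  have hd2 : |y' - y| < G ρ (r + ε') - y := lt_of_lt_of_le hy' (min_le_right _ _)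
  rw [abs_lt] at hd1 hd2
  have hu : F hρc hρpos y' < r + ε' := (F_lt_iff hρc hρpos (by linarith)).2 (by linarith)
  have hl : r - ε' ≤ F hρc hρpos y' := by
    rcases lt_or_ge (F hρc hρpos y') (r - ε') with h|h
    · exfalso
      have := (F_lt_iff hρc hρpos h1).1 h
      linarith
    · exact h
  rw [abs_lt]
  constructor
  · have : ε' ≤ ε/2 := min_le_left _ _
    linarith
  · have : ε' ≤ ε/2 := min_le_left _ _
    linarith

theorem F_tendsto_atBot : Tendsto (F hρc hρpos) atBot (nhds 0) := by
  rw [tendsto_order]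
  constructor
  · intro a ha
    exact Filter.Eventually.of_forall (fun y => lt_trans ha (F_pos hρc hρpos y))
  · intro a ha
    filter_upwards [Filter.eventually_lt_atBot (G ρ a)] with y hy
    exact (F_lt_iff hρc hρpos ha).2 hy

end Ffacts

section sigma

variable (hρc : ContinuousOn ρ (Set.Ici 0)) (hρpos : ∀ s > (0:ℝ), 0 < ρ s)

noncomputable def sig (hρc : ContinuousOn ρ (Set.Ici 0)) (hρpos : ∀ s > (0:ℝ), 0 < ρ s)
    (s t : ℝ) : ℝ := if 0 < s then F hρc hρpos (G ρ s - t) else 0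

theorem sig_of_pos {s : ℝ} (hs : 0 < s) (t : ℝ) :
    sig hρc hρpos s t = F hρc hρpos (G ρ s - t) := if_pos hs

theorem sig_of_nonpos {s : ℝ} (hs : ¬ 0 < s) (t : ℝ) : sig hρc hρpos s t = 0 := if_neg hs

theorem sig_nonneg (s t : ℝ) : 0 ≤ sig hρc hρpos s t := by
  rcases lt_or_ge 0 s with h|h
  · rw [sig_of_pos hρc hρpos h]
    exact le_of_lt (F_pos hρc hρpos _)
  · rw [sig_of_nonpos hρc hρpos (not_lt.2 h)]

theorem sig_le_self {s t : ℝ} (hs : 0 ≤ s) (ht : 0 ≤ t) : sig hρc hρpos s t ≤ s := by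
  rcases lt_or_eq_of_le hs with h|h
  · rw [sig_of_pos hρc hρpos h]
    rw [F_le_iff hρc hρpos h]
    linarith
  · rw [sig_of_nonpos hρc hρpos (by rw [← h]; exact lt_irrefl 0)]
    exact le_of_eq h

theorem sig_classKL : ClassKL (sig hρc hρpos) := by
  refine ⟨?_, ?_, ?_⟩
  · -- continuity
    rintro ⟨s, t⟩ ⟨hs, ht⟩
    simp only [Set.mem_Ici] at hs ht
    rcases lt_or_eq_of_le hs with h|h
    · -- s > 0 : continuous at
      apply ContinuousAt.continuousWithinAt
      have hev : ∀ᶠ p : ℝ × ℝ in nhds (s, t), sig hρc hρpos p.1 p.2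
          = F hρc hρpos (G ρ p.1 - p.2) := by
        filter_upwards [(isOpen_lt continuous_const continuous_fst).mem_nhds
          (show (0:ℝ) < (s,t).1 from h)] with p hp
        exact sig_of_pos hρc hρpos hp _
      have hc : ContinuousAt (fun p : ℝ × ℝ => F hρc hρpos (G ρ p.1 - p.2)) (s, t) := by
        apply (F_continuous hρc hρpos).continuousAt.comp
        have hG : ContinuousAt (G ρ) (Prod.fst (s, t)) := G_contAt hρc hρpos h
        exact (hG.comp continuousAt_fst).sub continuousAt_snd
      exact hc.congr (hev.mono fun p hp => hp.symm)
    · -- s = 0 : squeeze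
      subst h
      have h0 : sig hρc hρpos ((0:ℝ), t).1 ((0:ℝ), t).2 = 0 := sig_of_nonpos hρc hρpos (lt_irrefl 0) t
      unfold ContinuousWithinAt
      rw [show (fun p : ℝ × ℝ => sig hρc hρpos p.1 p.2) ((0:ℝ), t) = 0 from h0]
      apply squeeze_zero'
      · exact Filter.Eventually.of_forall (fun p => sig_nonneg hρc hρpos p.1 p.2)
      · filter_upwards [self_mem_nhdsWithin] with p hp
        exact sig_le_self hρc hρpos hp.1 hp.2
      · exact (continuousAt_fst.continuousWithinAt :
          ContinuousWithinAt Prod.fst (Set.Ici 0 ×ˢ Set.Ici 0) ((0:ℝ), t))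
  · -- strict mono in s
    intro t ht
    constructor
    · intro s1 hs1 s2 hs2 h12
      simp only [Set.mem_Ici] at hs1 hs2
      rcases lt_or_eq_of_le hs1 with h1|h1
      · simp only [sig_of_pos hρc hρpos h1, sig_of_pos hρc hρpos (lt_trans h1 h12)]
        exact F_strictMono hρc hρpos (by
          have := (G_strictMonoOn hρc hρpos) (Set.mem_Ioi.2 h1)
            (Set.mem_Ioi.2 (lt_trans h1 h12)) h12
          linarith)
      · subst h1
        show sig hρc hρpos 0 t < sig hρc hρpos s2 t
        rw [sig_of_nonpos hρc hρpos (lt_irrefl 0), sig_of_pos hρc hρpos h12]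
        exact F_pos hρc hρpos _
    · exact sig_of_nonpos hρc hρpos (lt_irrefl 0) t
  · -- antitone in t and tendsto 0
    intro s hs
    rcases lt_or_eq_of_le hs with h|h
    · constructor
      · intro t1 _ t2 _ h12
        simp only [sig_of_pos hρc hρpos h]
        exact F_mono hρc hρpos (by linarith)
      · have h1 : Tendsto (fun t : ℝ => G ρ s - t) atTop atBot := by
          apply tendsto_atBot_add_const_left
          exact tendsto_neg_atTop_atBot
        have := (F_tendsto_atBot hρc hρpos).comp h1
        apply Tendsto.congr' _ this
        filter_upwards with t
        exact (sig_of_pos hρc hρpos h t).symm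
    · subst h
      constructor
      · intro t1 _ t2 _ h12
        simp [sig_of_nonpos hρc hρpos (lt_irrefl 0)]
      · apply Tendsto.congr' _ tendsto_const_nhds
        filter_upwards with t
        exact (sig_of_nonpos hρc hρpos (lt_irrefl 0) t).symm

end sigma

section comparison

variable (hρc : ContinuousOn ρ (Set.Ici 0)) (hρpos : ∀ s > (0:ℝ), 0 < ρ s)
  (hρnn : ∀ s ≥ (0:ℝ), 0 ≤ ρ s)

theorem F_hasDeriv (y : ℝ) :
    HasDerivAt (F hρc hρpos) (rh ρ (F hρc hρpos y)) y := by
  have hpos := F_pos hρc hρpos y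
  have h1 : HasDerivAt (G ρ) (g ρ (F hρc hρpos y)) (F hρc hρpos y) :=
    G_hasDeriv hρc hρpos hpos
  have h2 := HasDerivAt.of_local_left_inverse ((F_continuous hρc hρpos).continuousAt)
    h1 (ne_of_gt (g_pos hρpos hpos)) (Filter.Eventually.of_forall (G_F hρc hρpos))
  simpa [g, inv_inv] using h2

theorem main_bound (hρc : ContinuousOn ρ (Set.Ici 0)) (hρpos : ∀ s > (0:ℝ), 0 < ρ s)
    {u u' : ℝ → ℝ}
    (hu0 : ∀ t ≥ (0:ℝ), 0 ≤ u t)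
    (hui : ∀ t ≥ (0:ℝ), IntervalIntegrable u' volume 0 t)
    (huu : ∀ t ≥ (0:ℝ), u t = u 0 + ∫ τ in (0:ℝ)..t, u' τ)
    (hub : ∀ᵐ t ∂volume, 0 ≤ t → u' t ≤ -ρ (u t))
    {T : ℝ} (hT : 0 ≤ T) {ε : ℝ} (hε : 0 < ε) (hε1 : ε < 1) :
    u T ≤ F hρc hρpos (G ρ (u 0 + ε) - (1-ε)*T) := by
  -- continuity of u on [0, T]
  have hucont : ContinuousOn u (Set.Icc 0 T) := by
    have h1 : ContinuousOn (fun x => ∫ τ in (0:ℝ)..x, u' τ) (Set.uIcc 0 T) :=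
      continuousOn_primitive_interval' (hui T hT) left_mem_uIcc
    rw [uIcc_of_le hT] at h1
    apply (continuousOn_const.add h1).congr
    intro x hx
    exact huu x hx.1
  have humem : ∀ x ∈ Set.Icc (0:ℝ) T, u x ∈ Set.Ici (0:ℝ) := fun x hx => hu0 x hx.1
  have hrucont : ContinuousOn (fun τ => ρ (u τ)) (Set.Icc 0 T) :=
    hρc.comp hucont humem
  -- integrability of u' on subintervals
  have hui' : ∀ x y : ℝ, 0 ≤ x → 0 ≤ y → IntervalIntegrable u' volume x y :=
    fun x y hx hy => (hui x hx).symm.trans (hui y hy)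
  -- key integral inequality
  have key : ∀ x y : ℝ, 0 ≤ x → x ≤ y → y ≤ T →
      u y - u x ≤ - ∫ τ in x..y, ρ (u τ) := by
    intro x y hx hxy hyT
    have hy : (0:ℝ) ≤ y := hx.trans hxy
    have h1 : u y - u x = ∫ τ in x..y, u' τ := by
      have e1 := huu x hx
      have e2 := huu y hy
      have e3 : (∫ τ in (0:ℝ)..x, u' τ) + ∫ τ in x..y, u' τ = ∫ τ in (0:ℝ)..y, u' τ :=
        integral_add_adjacent_intervals (hui x hx) (hui' x y hx hy)
      rw [e1, e2, ← e3]; ring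
    have hint2 : IntervalIntegrable (fun τ => -ρ (u τ)) volume x y := by
      apply ContinuousOn.intervalIntegrable
      apply (hrucont.mono _).neg
      rw [uIcc_of_le hxy]
      exact Set.Icc_subset_Icc hx hyT
    have h2 : (∫ τ in x..y, u' τ) ≤ ∫ τ in x..y, -ρ (u τ) := by
      apply integral_mono_ae_restrict hxy (hui' x y hx hy) hint2
      have hae : ∀ᵐ t ∂(volume.restrict (Set.Icc x y)), 0 ≤ t → u' t ≤ -ρ (u t) :=
        ae_restrict_of_ae hub
      have hmem : ∀ᵐ t ∂(volume.restrict (Set.Icc x y)), t ∈ Set.Icc x y :=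
        ae_restrict_mem measurableSet_Icc
      filter_upwards [hae, hmem] with t h1t h2t
      exact h1t (hx.trans h2t.1)
    rw [h1, ← intervalIntegral.integral_neg] at *
    linarith [h2]
  -- the slope estimate
  have hslope : ∀ x ∈ Set.Ico (0:ℝ) T, ∀ r, -ρ (u x) < r →
      ∃ᶠ z in nhdsWithin x (Set.Ioi x), slope u x z < r := by
    intro x hx r hr
    apply Filter.Eventually.frequently
    set c := (r + ρ (u x))/2 with hc
    have hcpos : 0 < c := by simp only [hc]; linarith
    have hcr : c - ρ (u x) < r := by simp only [hc]; linarith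
    have hcont := (hrucont x ⟨hx.1, le_of_lt hx.2⟩)
    have hev : ∀ᶠ τ in nhdsWithin x (Set.Icc 0 T), ρ (u x) - c < ρ (u τ) :=
      hcont.eventually (eventually_gt_nhds (by linarith))
    rcases Metric.mem_nhdsWithin_iff.1 hev with ⟨δ, hδpos, hδ⟩
    have hm : x < min (x + δ/2) T := lt_min (by linarith) hx.2
    filter_upwards [Ioc_mem_nhdsGT_of_mem ⟨le_rfl, hm⟩] with z hz
    have hxz : x < z := hz.1
    have hzT : z ≤ T := hz.2.trans (min_le_right _ _)
    have hzd : z ≤ x + δ/2 := hz.2.trans (min_le_left _ _)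
    have hbd : ∀ τ ∈ Set.Icc x z, ρ (u x) - c ≤ ρ (u τ) := by
      intro τ hτ
      apply le_of_lt
      apply hδ
      constructor
      · rw [Metric.mem_ball, Real.dist_eq, abs_lt]
        constructor <;> [linarith [hτ.1]; linarith [hτ.2]]
      · exact ⟨hx.1.trans hτ.1, hτ.2.trans hzT⟩
    have hint : IntervalIntegrable (fun τ => ρ (u τ)) volume x z := by
      apply ContinuousOn.intervalIntegrable
      apply hrucont.mono
      rw [uIcc_of_le (le_of_lt hxz)]
      exact Set.Icc_subset_Icc hx.1 hzT
    have h2 : (z - x) * (ρ (u x) - c) ≤ ∫ τ in x..z, ρ (u τ) := by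
      have h0 := integral_mono_on (le_of_lt hxz)
        (intervalIntegrable_const) hint (fun τ hτ => hbd τ hτ)
      rwa [intervalIntegral.integral_const, smul_eq_mul] at h0
    have h3 : u z - u x ≤ -((z - x) * (ρ (u x) - c)) := by
      have := key x z hx.1 (le_of_lt hxz) hzT
      linarith
    rw [slope_def_field]
    rw [div_lt_iff₀ (by linarith : (0:ℝ) < z - x)]
    have h4 : u z - u x ≤ (z - x) * (c - ρ (u x)) := by nlinarith [h3]
    calc u z - u x ≤ (z - x) * (c - ρ (u x)) := h4
    _ < r * (z - x) := by rw [mul_comm]; exact mul_lt_mul_of_pos_right hcr (by linarith)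
  -- the barrier function
  have hu00 : 0 ≤ u 0 := hu0 0 le_rfl
  set B : ℝ → ℝ := fun τ => F hρc hρpos (G ρ (u 0 + ε) - (1-ε)*τ) with hBdef
  have hB : ∀ τ, HasDerivAt B (rh ρ (B τ) * (-(1-ε))) τ := by
    intro τ
    have hinner : HasDerivAt (fun τ : ℝ => G ρ (u 0 + ε) - (1-ε)*τ) (-(1-ε)) τ := by
      simpa using ((hasDerivAt_id τ).const_mul (1-ε)).const_sub (G ρ (u 0 + ε))
    exact (F_hasDeriv hρc hρpos _).comp τ hinner
  have hB0 : B 0 = u 0 + ε := by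
    simp only [hBdef, mul_zero, sub_zero]
    exact F_G hρc hρpos (by linarith)
  have hbound : ∀ x ∈ Set.Ico (0:ℝ) T, u x = B x →
      -ρ (u x) < rh ρ (B x) * (-(1-ε)) := by
    intro x hx heq
    have hBpos : 0 < B x := F_pos hρc hρpos _
    have h1 : rh ρ (B x) ≤ ρ (B x) := rh_le_rho
    have h2 : 0 < rh ρ (B x) := rh_pos hρpos hBpos
    rw [heq]
    nlinarith
  have := image_le_of_liminf_slope_right_lt_deriv_boundary hucont hslope
    (by rw [hB0]; linarith) hB hbound (Set.mem_Icc.2 ⟨hT, le_rfl⟩)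
  exact this

end comparison

end S14

theorem stmt14 (ρ : ℝ → ℝ) (hρc : ContinuousOn ρ (Set.Ici 0)) (hρ0 : ρ 0 = 0)
    (hρpos : ∀ s > (0:ℝ), 0 < ρ s) (hρnn : ∀ s ≥ (0:ℝ), 0 ≤ ρ s)
    (hlip : ∃ K : NNReal, LipschitzOnWith K ρ (Set.Ici 0)) :
    ∃ σ : ℝ → ℝ → ℝ, ClassKL σ ∧
      ∀ u u' : ℝ → ℝ,
        (∀ t ≥ (0:ℝ), 0 ≤ u t) →
        (∀ t ≥ (0:ℝ), IntervalIntegrable u' MeasureTheory.volume 0 t) →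
        (∀ t ≥ (0:ℝ), u t = u 0 + ∫ τ in (0:ℝ)..t, u' τ) →
        (∀ᵐ t ∂MeasureTheory.volume, 0 ≤ t → u' t ≤ -ρ (u t)) →
        ∀ t ≥ (0:ℝ), u t ≤ σ (u 0) t := by
  classical
  refine ⟨S14.sig hρc hρpos, S14.sig_classKL hρc hρpos, ?_⟩
  intro u u' hu0 hui huu hub t ht
  have hu00 : 0 ≤ u 0 := hu0 0 le_rfl
  have hall : ∀ ε : ℝ, 0 < ε → ε < 1 →
      u t ≤ S14.F hρc hρpos (S14.G ρ (u 0 + ε) - (1-ε)*t) :=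
    fun ε hε hε1 => S14.main_bound hρc hρpos hu0 hui huu hub ht hε hε1
  rcases lt_or_eq_of_le hu00 with h|h
  · -- u 0 > 0
    rw [S14.sig_of_pos hρc hρpos h]
    have hten : Tendsto (fun ε : ℝ => S14.F hρc hρpos (S14.G ρ (u 0 + ε) - (1-ε)*t))
        (nhdsWithin 0 (Set.Ioi 0)) (nhds (S14.F hρc hρpos (S14.G ρ (u 0) - t))) := by
      apply Tendsto.mono_left _ nhdsWithin_le_nhds
      have hG : ContinuousAt (S14.G ρ) (u 0 + 0) := by
        simpa using S14.G_contAt hρc hρpos h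
      have h1 : ContinuousAt (fun ε : ℝ => S14.G ρ (u 0 + ε) - (1-ε)*t) 0 := by
        apply ContinuousAt.sub
        · exact hG.comp (by fun_prop)
        · fun_prop
      have h2 := ((S14.F_continuous hρc hρpos).continuousAt).comp h1
      have h3 : (S14.F hρc hρpos ∘ fun ε : ℝ => S14.G ρ (u 0 + ε) - (1-ε)*t) 0
          = S14.F hρc hρpos (S14.G ρ (u 0) - t) := by
        simp
      unfold ContinuousAt at h2
      rw [h3] at h2
      exact h2
    apply ge_of_tendsto hten
    filter_upwards [Ioo_mem_nhdsGT_of_mem (⟨le_rfl, zero_lt_one⟩ : (0:ℝ) ∈ Set.Ico 0 1)]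
      with ε hε
    exact hall ε hε.1 hε.2
  · -- u 0 = 0
    rw [← h, S14.sig_of_nonpos hρc hρpos (lt_irrefl 0)]
    by_contra hcon
    push_neg at hcon
    set ε := min (u t / 2) (1/2) with hεdef
    have hε : 0 < ε := lt_min (by linarith) (by norm_num)
    have hε1 : ε < 1 := lt_of_le_of_lt (min_le_right _ _) (by norm_num)
    have h1 := hall ε hε hε1
    have h2 : S14.F hρc hρpos (S14.G ρ (u 0 + ε) - (1-ε)*t) ≤ ε := by
      rw [S14.F_le_iff hρc hρpos hε]
      have he : S14.G ρ (u 0 + ε) = S14.G ρ ε := by rw [← h, zero_add]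
      rw [he]
      nlinarith [ht]
    have h3 : u t ≤ ε := h1.trans h2
    have h4 : ε ≤ u t / 2 := min_le_left _ _
    linarith
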